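/- Let Δ=δ₁δ₂…∈{0,1}^ℕ and Θ=ϑ₁ϑ₂…∈{E,R}^ℕ, and assume both E and R occur infinitely many times in Θ. Suppose that for every a∈{0,1}, every ϑ∈{E,R} and every n₀∈ℕ there exists n>n₀ such that (δ_{n+1}=a and ϑ_n=ϑ̄) or (δ_{n+1}=ā and ϑ_n=ϑ), where ā denotes the letter distinct from a and ϑ̄ the antimorphism distinct from ϑ (i.e., the equivalence 'δ_{n+1}=a iff ϑ_n=ϑ' eventually holds for no choice of a and ϑ). Then every prefix of u(Δ,Θ) is a left special factor of u(Δ,Θ); consequently u(Δ,Θ) is aperiodic. -/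

import Mathlib

/-!
Generalized pseudostandard words (de Luca–De Luca) over binary and ternary
alphabets: antimorphisms, pseudopalindromic closure, directive bi-sequences.
-/

namespace GPS

variable {A : Type*} [Inhabited A]

/-- The involutory antimorphism on finite words induced by the letter map `f`:
reverse the word and apply `f` letterwise. -/
def anti (f : A → A) (w : List A) : List A := (w.map f).reverse

/-- `w` is an `f`-palindrome (a `ϑ`-palindrome for the antimorphism induced by `f`). -/
def IsPal (f : A → A) (w : List A) : Prop := anti f w = w

/-- The `f`-palindromic closure of `w`: a shortest `f`-palindrome having `w` as a
prefix (returns `w` itself in the degenerate case where none exists). -/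
noncomputable def closure (f : A → A) (w : List A) : List A := by
  classical
  exact if h : ∃ n : ℕ, ∃ p : List A, p.length = n ∧ w <+: p ∧ IsPal f p then
    Classical.choose (Nat.find_spec h)
  else w

/-- The sequence of pseudopalindromic prefixes `w_n` of the generalized
pseudostandard word `u(Δ, Θ)`; `prefixes Δ Θ n` is the paper's `w_n`, with
`Δ n = δ_{n+1}` and `Θ n = ϑ_{n+1}` (0-based indexing of the bi-sequence). -/
noncomputable def prefixes (Δ : ℕ → A) (Θ : ℕ → A → A) : ℕ → List A
  | 0 => []
  | n + 1 => closure (Θ n) (prefixes Δ Θ n ++ [Δ n])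

/-- The generalized pseudostandard word `u(Δ, Θ)` as an infinite word `ℕ → A`. -/
noncomputable def word (Δ : ℕ → A) (Θ : ℕ → A → A) (k : ℕ) : A :=
  (prefixes Δ Θ (k + 1)).getD k default

/-- `p` is a (finite) prefix of the infinite word `x`. -/
def IsPref (p : List A) (x : ℕ → A) : Prop := ∀ i < p.length, p.getD i default = x i

/-- `w` is a factor of the infinite word `x`. -/
def IsFactor (w : List A) (x : ℕ → A) : Prop :=
  ∃ i : ℕ, ∀ j < w.length, w.getD j default = x (i + j)

/-- `w` is a left special factor of the infinite word `x`. -/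
def LeftSpecial (w : List A) (x : ℕ → A) : Prop :=
  ∃ a b : A, a ≠ b ∧ IsFactor (a :: w) x ∧ IsFactor (b :: w) x

/-- The infinite word `x` is (eventually) periodic, i.e. of the form `z v^ω`
with `v` nonempty. -/
def Periodic (x : ℕ → A) : Prop :=
  ∃ p : ℕ, 0 < p ∧ ∃ N : ℕ, ∀ n, N ≤ n → x (n + p) = x n

/-- The infinite word `x` is purely periodic with period `q`, i.e. `x = q^ω`. -/
def PurePeriod (q : List A) (x : ℕ → A) : Prop :=
  q ≠ [] ∧ ∀ i : ℕ, x i = q.getD (i % q.length) default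

/-- Concatenation of `k` copies of the finite word `l`, i.e. `l^k`. -/
def wpow (l : List A) (k : ℕ) : List A := (List.replicate k l).flatten

/-! ### The binary alphabet `{0,1}` -/

/-- Letter map of the reversal antimorphism `R` over `{0,1}`. -/
def Rb : Fin 2 → Fin 2 := id

/-- Letter map of the exchange antimorphism `E` over `{0,1}` (`0 ↔ 1`). -/
def Eb : Fin 2 → Fin 2 := fun x => x + 1

/-- A binary directive bi-sequence is normalized if the sequence `(w_n)` contains
every prefix of `u(Δ,Θ)` that is an `R`-palindrome or an `E`-palindrome. -/
def NormalizedB (Δ : ℕ → Fin 2) (Θ : ℕ → Fin 2 → Fin 2) : Prop :=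
  ∀ p : List (Fin 2), IsPref p (word Δ Θ) → (IsPal Rb p ∨ IsPal Eb p) →
    ∃ n : ℕ, prefixes Δ Θ n = p

/-! ### The ternary alphabet `{0,1,2}` -/

/-- Letter map of the reversal antimorphism `R` over `{0,1,2}`. -/
def Rt : Fin 3 → Fin 3 := id

/-- Letter map of the exchange antimorphism `E_i` over `{0,1,2}`: it fixes `i`
and exchanges the other two letters (indeed `-(i+x) = i` iff `x = i` in `Fin 3`). -/
def Et (i : Fin 3) : Fin 3 → Fin 3 := fun x => -(i + x)

/-- A ternary directive bi-sequence is normalized if the sequence `(w_n)` contains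
every prefix of `u(Δ,Θ)` that is a `ϑ`-palindrome for some involutory antimorphism `ϑ`. -/
def NormalizedT (Δ : ℕ → Fin 3) (Θ : ℕ → Fin 3 → Fin 3) : Prop :=
  ∀ p : List (Fin 3), IsPref p (word Δ Θ) → (IsPal Rt p ∨ ∃ i : Fin 3, IsPal (Et i) p) →
    ∃ n : ℕ, prefixes Δ Θ n = p

end GPS
namespace GPS

set_option linter.unusedSectionVars false

/-! ### Auxiliary lemmas -/

section AuxGeneral
variable {A : Type*} [Inhabited A]

lemma anti_length (f : A → A) (w : List A) : (anti f w).length = w.length := by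
  simp [anti]

lemma anti_append (f : A → A) (u v : List A) :
    anti f (u ++ v) = anti f v ++ anti f u := by
  simp [anti]

lemma anti_anti {f : A → A} (hf : ∀ x, f (f x) = x) (w : List A) :
    anti f (anti f w) = w := by
  simp only [anti, List.map_reverse, List.reverse_reverse, List.map_map]
  have : (f ∘ f) = id := funext hf
  rw [this, List.map_id]

lemma anti_getD (f : A → A) (w : List A) {j : ℕ} (hj : j < w.length) :
    (anti f w).getD j default = f (w.getD (w.length - 1 - j) default) := by
  have h2 : j < (anti f w).length := by rwa [anti_length]
  have h3 : w.length - 1 - j < w.length := by omega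
  rw [List.getD_eq_getElem _ _ h2, List.getD_eq_getElem _ _ h3]
  show ((w.map f).reverse)[j]'(by simpa [anti] using h2) = _
  rw [List.getElem_reverse, List.getElem_map]
  congr 2
  simp

lemma pal_getD {f : A → A} {W : List A} (hW : IsPal f W) {j : ℕ} (hj : j < W.length) :
    W.getD j default = f (W.getD (W.length - 1 - j) default) := by
  conv_lhs => rw [← hW]
  exact anti_getD f W hj

lemma getD_prefix {l₁ l₂ : List A} (h : l₁ <+: l₂) {i : ℕ} (hi : i < l₁.length) :
    l₁.getD i default = l₂.getD i default := by
  obtain ⟨t, rfl⟩ := h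
  have hi2 : i < (l₁ ++ t).length := by
    rw [List.length_append]; omega
  rw [List.getD_eq_getElem _ _ hi, List.getD_eq_getElem _ _ hi2,
    List.getElem_append_left hi]

lemma closure_spec {f : A → A} (hf : ∀ x, f (f x) = x) (w : List A) :
    w <+: closure f w ∧ IsPal f (closure f w) := by
  classical
  have hpal : IsPal f (w ++ anti f w) := by
    unfold IsPal
    rw [anti_append, anti_anti hf]
  have h : ∃ n : ℕ, ∃ p : List A, p.length = n ∧ w <+: p ∧ IsPal f p :=
    ⟨(w ++ anti f w).length, w ++ anti f w, rfl, List.prefix_append _ _, hpal⟩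
  unfold closure
  rw [dif_pos h]
  obtain ⟨-, h2, h3⟩ := Classical.choose_spec (Nat.find_spec h)
  exact ⟨h2, h3⟩

end AuxGeneral

section AuxBinary
variable (Δ : ℕ → Fin 2) (Θ : ℕ → Fin 2 → Fin 2)

lemma inv_of_mem {f : Fin 2 → Fin 2} (h : f = Rb ∨ f = Eb) : ∀ x, f (f x) = x := by
  rcases h with rfl | rfl <;> decide

lemma Eb_Eb : ∀ x : Fin 2, Eb (Eb x) = x := by decide

lemma prefixes_succ (hΘ : ∀ n, Θ n = Rb ∨ Θ n = Eb) (n : ℕ) :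
    (prefixes Δ Θ n ++ [Δ n]) <+: prefixes Δ Θ (n + 1) ∧
      IsPal (Θ n) (prefixes Δ Θ (n + 1)) := by
  simp only [prefixes]
  exact closure_spec (inv_of_mem (hΘ n)) _

lemma length_lt_succ (hΘ : ∀ n, Θ n = Rb ∨ Θ n = Eb) (n : ℕ) :
    (prefixes Δ Θ n).length < (prefixes Δ Θ (n + 1)).length := by
  have h := (prefixes_succ Δ Θ hΘ n).1.length_le
  rw [List.length_append] at h
  simpa using h

lemma length_mono (hΘ : ∀ n, Θ n = Rb ∨ Θ n = Eb) {m n : ℕ} (h : m < n) :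
    (prefixes Δ Θ m).length < (prefixes Δ Θ n).length := by
  obtain ⟨d, rfl⟩ : ∃ d, n = m + d + 1 := ⟨n - m - 1, by omega⟩
  clear h
  induction d with
  | zero => exact length_lt_succ Δ Θ hΘ m
  | succ d ih => exact lt_trans ih (length_lt_succ Δ Θ hΘ (m + d + 1))

lemma le_length (hΘ : ∀ n, Θ n = Rb ∨ Θ n = Eb) (n : ℕ) :
    n ≤ (prefixes Δ Θ n).length := by
  induction n with
  | zero => omega
  | succ n ih => have := length_lt_succ Δ Θ hΘ n; omega

lemma prefixes_prefix (hΘ : ∀ n, Θ n = Rb ∨ Θ n = Eb) {m n : ℕ} (h : m ≤ n) :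
    prefixes Δ Θ m <+: prefixes Δ Θ n := by
  obtain ⟨d, rfl⟩ := Nat.exists_eq_add_of_le h
  clear h
  induction d with
  | zero => exact List.prefix_rfl
  | succ d ih =>
    exact ih.trans ((List.prefix_append _ _).trans (prefixes_succ Δ Θ hΘ (m + d)).1)
    
lemma word_getD (hΘ : ∀ n, Θ n = Rb ∨ Θ n = Eb) {m i : ℕ}
    (hi : i < (prefixes Δ Θ m).length) :
    word Δ Θ i = (prefixes Δ Θ m).getD i default := by
  unfold word
  rcases le_total (i + 1) m with h | h
  · exact getD_prefix (prefixes_prefix Δ Θ hΘ h)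
      (lt_of_lt_of_le (Nat.lt_succ_self i) (le_length Δ Θ hΘ (i + 1)))
  · exact (getD_prefix (prefixes_prefix Δ Θ hΘ h) hi).symm

lemma word_at_length (hΘ : ∀ n, Θ n = Rb ∨ Θ n = Eb) (n : ℕ) :
    word Δ Θ ((prefixes Δ Θ n).length) = Δ n := by
  have h1 := (prefixes_succ Δ Θ hΘ n).1
  have hl : (prefixes Δ Θ n).length < (prefixes Δ Θ (n + 1)).length :=
    length_lt_succ Δ Θ hΘ n
  rw [word_getD Δ Θ hΘ hl,
    ← getD_prefix h1 (by rw [List.length_append]; simp),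
    List.getD_eq_getElem _ _ (by rw [List.length_append]; simp)]
  exact List.getElem_concat_length rfl _

lemma reflect (hΘ : ∀ n, Θ n = Rb ∨ Θ n = Eb) (p : List (Fin 2)) (i n : ℕ)
    (hocc : ∀ j < p.length, p.getD j default = word Δ Θ (i + j))
    (hlt : i + p.length < (prefixes Δ Θ (n + 1)).length) :
    (∀ j < p.length, (anti (Θ n) p).getD j default =
        word Δ Θ ((prefixes Δ Θ (n + 1)).length - (i + p.length) + j)) ∧
      word Δ Θ ((prefixes Δ Θ (n + 1)).length - (i + p.length) - 1) =
        Θ n (word Δ Θ (i + p.length)) := by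
  set W := prefixes Δ Θ (n + 1) with hWdef
  set ℓ := W.length with hldef
  set L := p.length with hLdef
  have hpal : IsPal (Θ n) W := (prefixes_succ Δ Θ hΘ n).2
  have hxW : ∀ m, m < ℓ → word Δ Θ m = W.getD m default := fun m hm =>
    word_getD Δ Θ hΘ hm
  constructor
  · intro j hj
    have h1 : ℓ - (i + L) + j < ℓ := by omega
    have h2 : i + (L - 1 - j) < ℓ := by omega
    have e1 : (anti (Θ n) p).getD j default = Θ n (p.getD (L - 1 - j) default) :=
      anti_getD _ _ hj
    have e3 : W.getD (ℓ - (i + L) + j) default =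
        Θ n (W.getD (ℓ - 1 - (ℓ - (i + L) + j)) default) := pal_getD hpal h1
    have e4 : ℓ - 1 - (ℓ - (i + L) + j) = i + (L - 1 - j) := by omega
    have e6 : word Δ Θ (i + (L - 1 - j)) = p.getD (L - 1 - j) default :=
      (hocc _ (by omega)).symm
    rw [e1, hxW _ h1, e3, e4, ← hxW _ h2, e6]
  · have h0 : ℓ - (i + L) - 1 < ℓ := by omega
    have e3 : W.getD (ℓ - (i + L) - 1) default =
        Θ n (W.getD (ℓ - 1 - (ℓ - (i + L) - 1)) default) := pal_getD hpal h0
    have e4 : ℓ - 1 - (ℓ - (i + L) - 1) = i + L := by omega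
    rw [hxW _ h0, e3, e4, ← hxW _ hlt]

lemma cons_factor (hΘ : ∀ n, Θ n = Rb ∨ Θ n = Eb)
    (hinfE : {n | Θ n = Eb}.Infinite) (hinfR : {n | Θ n = Rb}.Infinite)
    (hneg : ∀ (a : Fin 2) (ϑ ϑ' : Fin 2 → Fin 2),
      ((ϑ = Rb ∧ ϑ' = Eb) ∨ (ϑ = Eb ∧ ϑ' = Rb)) →
      ∀ n₀ : ℕ, ∃ n, n₀ ≤ n ∧
        ((Δ (n + 1) = a ∧ Θ n = ϑ') ∨ (Δ (n + 1) = Eb a ∧ Θ n = ϑ)))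
    (p : List (Fin 2)) (hp : IsPref p (word Δ Θ)) (a : Fin 2) :
    IsFactor (a :: p) (word Δ Θ) := by
  obtain ⟨n, hn, hcase⟩ := hneg a Eb Rb (Or.inr ⟨rfl, rfl⟩) p.length
  set x := word Δ Θ with hxdef
  set L := p.length with hLdef
  have hL1 : 0 + L < (prefixes Δ Θ (n + 1)).length := by
    have := le_length Δ Θ hΘ (n + 1); omega
  have hocc0 : ∀ j < p.length, p.getD j default = x (0 + j) := by
    intro j hj; rw [Nat.zero_add]; exact hp j hj
  have R1 := reflect Δ Θ hΘ p 0 n hocc0 hL1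
  set ℓ₁ := (prefixes Δ Θ (n + 1)).length with hl1def
  -- find k > n with the same antimorphism
  obtain ⟨k, hkThm, hkgt⟩ : ∃ k, Θ k = Θ n ∧ n < k := by
    rcases hΘ n with h | h
    · obtain ⟨k, hk, hk2⟩ := hinfR.exists_gt n
      exact ⟨k, by rw [hk, h], hk2⟩
    · obtain ⟨k, hk, hk2⟩ := hinfE.exists_gt n
      exact ⟨k, by rw [hk, h], hk2⟩
  set ℓ₂ := (prefixes Δ Θ (k + 1)).length with hl2def
  have hl12 : ℓ₁ < ℓ₂ := length_mono Δ Θ hΘ (by omega)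
  have hLl1 : L < ℓ₁ := by omega
  have hoccq : ∀ j < (anti (Θ n) p).length,
      (anti (Θ n) p).getD j default = x ((ℓ₁ - L) + j) := by
    intro j hj
    rw [anti_length] at hj
    have := R1.1 j hj
    rwa [Nat.zero_add] at this
  have hlt2 : (ℓ₁ - L) + (anti (Θ n) p).length < ℓ₂ := by
    rw [anti_length]; omega
  have R2 := reflect Δ Θ hΘ (anti (Θ n) p) (ℓ₁ - L) k hoccq hlt2
  have hsum : (ℓ₁ - L) + (anti (Θ n) p).length = ℓ₁ := by
    rw [anti_length]; omega
  rw [hsum, ← hxdef, ← hl2def] at R2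
  have hanti2 : anti (Θ k) (anti (Θ n) p) = p := by
    rw [hkThm]; exact anti_anti (inv_of_mem (hΘ n)) p
  -- the letter preceding the new occurrence is `a`
  have hxl1 : x ℓ₁ = Δ (n + 1) := word_at_length Δ Θ hΘ (n + 1)
  have hprec : x (ℓ₂ - ℓ₁ - 1) = a := by
    rw [R2.2, hxl1, hkThm]
    rcases hcase with ⟨h1, h2⟩ | ⟨h1, h2⟩
    · rw [h2, h1]; rfl
    · rw [h2, h1]; exact Eb_Eb a
  have hoccp : ∀ j < L, p.getD j default = x (ℓ₂ - ℓ₁ + j) := by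
    intro j hj
    have hj' : j < (anti (Θ n) p).length := by rw [anti_length]; exact hj
    have := R2.1 j hj'
    rwa [hanti2] at this
  refine ⟨ℓ₂ - ℓ₁ - 1, ?_⟩
  intro j hj
  rcases j with _ | j
  · simpa using hprec.symm
  · rw [List.getD_cons_succ]
    have hj' : j < L := by
      simp only [List.length_cons] at hj
      omega
    rw [hoccp j hj']
    congr 1
    omega

end AuxBinary

section AuxCount

lemma card_succ_le {α β : Type*} [DecidableEq α] [DecidableEq β] {s : Finset α} {t : Finset β}
    (res : α → β) {u v : α} (hu : u ∈ s) (hv : v ∈ s) (huv : u ≠ v) (hres : res u = res v)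
    (hsur : ∀ b ∈ t, b = res u ∨ ∃ a ∈ s, a ≠ u ∧ res a = b) :
    t.card + 1 ≤ s.card := by
  have hsub : t ⊆ (s.erase u).image res := by
    intro b hb
    rcases hsur b hb with h | ⟨c, hc, hcu, hcb⟩
    · exact Finset.mem_image.mpr ⟨v, Finset.mem_erase.mpr ⟨huv.symm, hv⟩,
        hres.symm.trans h.symm⟩
    · exact Finset.mem_image.mpr ⟨c, Finset.mem_erase.mpr ⟨hcu, hc⟩, hcb⟩
  have h1 := (Finset.card_le_card hsub).trans Finset.card_image_le
  have h2 := Finset.card_erase_of_mem hu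
  have h3 := Finset.card_pos.mpr ⟨u, hu⟩
  omega

lemma not_periodic_of_ls (x : ℕ → Fin 2)
    (hls : ∀ p : List (Fin 2), IsPref p x → LeftSpecial p x) : ¬ Periodic x := by
  rintro ⟨p, hp, N, hN⟩
  classical
  set M := N + p with hMdef
  have hg_mem : ∀ L n, (fun j : Fin L => x (n + (j : ℕ))) ∈
      (Finset.range M).image (fun n (j : Fin L) => x (n + (j : ℕ))) := by
    intro L n
    induction n using Nat.strong_induction_on with
    | _ n ih =>
      by_cases h : n < M
      · exact Finset.mem_image_of_mem _ (Finset.mem_range.mpr h)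
      · have h1 : (fun j : Fin L => x (n + (j : ℕ))) =
            fun j : Fin L => x ((n - p) + (j : ℕ)) := by
          funext j
          have he : (n - p + (j : ℕ)) + p = n + (j : ℕ) := by omega
          rw [← he, hN _ (by omega)]
        rw [h1]
        exact ih (n - p) (by omega)
  have hcard : ∀ L : ℕ,
      ((Finset.range M).image (fun n (j : Fin L) => x (n + (j : ℕ)))).card ≤ M :=
    fun L => le_trans Finset.card_image_le (by simp)
  have hgrow : ∀ L : ℕ,
      ((Finset.range M).image (fun n (j : Fin L) => x (n + (j : ℕ)))).card + 1 ≤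
      ((Finset.range M).image (fun n (j : Fin (L + 1)) => x (n + (j : ℕ)))).card := by
    intro L
    have hpfD : ∀ j < L, (List.ofFn (fun j : Fin L => x (j : ℕ))).getD j default = x j := by
      intro j hj
      rw [List.getD_eq_getElem _ _ (by simpa using hj), List.getElem_ofFn]
    have hpfpref : IsPref (List.ofFn (fun j : Fin L => x (j : ℕ))) x := by
      intro i hi
      exact hpfD i (by simpa using hi)
    obtain ⟨a, b, hab, ⟨ia, hia⟩, ⟨ib, hib⟩⟩ := hls _ hpfpref
    have hu0 : x ia = a := by simpa using (hia 0 (by simp)).symm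
    have hv0 : x ib = b := by simpa using (hib 0 (by simp)).symm
    have hures : ∀ j < L, x (ia + (j + 1)) = x j := by
      intro j hj
      have h1 := hia (j + 1) (by simp only [List.length_cons, List.length_ofFn]; omega)
      rw [List.getD_cons_succ, hpfD j hj] at h1
      exact h1.symm
    have hvres : ∀ j < L, x (ib + (j + 1)) = x j := by
      intro j hj
      have h1 := hib (j + 1) (by simp only [List.length_cons, List.length_ofFn]; omega)
      rw [List.getD_cons_succ, hpfD j hj] at h1
      exact h1.symm
    refine card_succ_le (fun v (j : Fin L) => v j.succ)
      (hg_mem (L + 1) ia) (hg_mem (L + 1) ib) ?_ ?_ ?_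
    · intro h
      apply hab
      have h0 := congrFun h (0 : Fin (L + 1))
      simp only [Fin.val_zero, Nat.add_zero] at h0
      rw [hu0, hv0] at h0
      exact h0
    · funext j
      show x (ia + ((j.succ : Fin (L + 1)) : ℕ)) = x (ib + ((j.succ : Fin (L + 1)) : ℕ))
      rw [Fin.val_succ, hures j j.isLt, hvres j j.isLt]
    · intro w hw
      obtain ⟨m, -, rfl⟩ := Finset.mem_image.mp hw
      by_cases hm0 : m = 0
      · left
        subst hm0
        funext j
        show x (0 + (j : ℕ)) = x (ia + ((j.succ : Fin (L + 1)) : ℕ))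
        rw [Nat.zero_add, Fin.val_succ, hures j j.isLt]
      · by_cases he : (fun j : Fin (L + 1) => x ((m - 1) + (j : ℕ))) =
            (fun j : Fin (L + 1) => x (ia + (j : ℕ)))
        · left
          funext j
          have h2 := congrFun he j.succ
          have h3 : m + (j : ℕ) = (m - 1) + ((j.succ : Fin (L + 1)) : ℕ) := by
            rw [Fin.val_succ]; omega
          show x (m + (j : ℕ)) = x (ia + ((j.succ : Fin (L + 1)) : ℕ))
          rw [h3, h2]
        · right
          refine ⟨(fun j : Fin (L + 1) => x ((m - 1) + (j : ℕ))),
            hg_mem (L + 1) (m - 1), he, ?_⟩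
          funext j
          show x ((m - 1) + ((j.succ : Fin (L + 1)) : ℕ)) = x (m + (j : ℕ))
          rw [Fin.val_succ]
          congr 1
          omega
  have hlow : ∀ L : ℕ,
      L + 1 ≤ ((Finset.range M).image (fun n (j : Fin L) => x (n + (j : ℕ)))).card := by
    intro L
    induction L with
    | zero =>
      have hmem := hg_mem 0 0
      have := Finset.card_pos.mpr ⟨_, hmem⟩
      omega
    | succ L ih =>
      have := hgrow L
      omega
  have h1 := hlow M
  have h2 := hcard M
  omega

end AuxCount


/-- if both `E` and `R` occur infinitely many times in `Θ` and for
every `a`, `ϑ` (with complementary letter `ā = Eb a` and antimorphism `ϑ̄ = ϑ'`)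
and every `n₀` there is `n > n₀` with `(δ_{n+1} = a ∧ ϑ_n = ϑ̄) ∨ (δ_{n+1} = ā ∧ ϑ_n = ϑ)`,
then every prefix of `u(Δ,Θ)` is a left special factor; consequently `u(Δ,Θ)` is
aperiodic. -/
theorem aperiodic_binary_left_special (Δ : ℕ → Fin 2) (Θ : ℕ → Fin 2 → Fin 2)
    (hΘ : ∀ n, Θ n = Rb ∨ Θ n = Eb)
    (hinfE : {n | Θ n = Eb}.Infinite) (hinfR : {n | Θ n = Rb}.Infinite)
    (hneg : ∀ (a : Fin 2) (ϑ ϑ' : Fin 2 → Fin 2),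
      ((ϑ = Rb ∧ ϑ' = Eb) ∨ (ϑ = Eb ∧ ϑ' = Rb)) →
      ∀ n₀ : ℕ, ∃ n, n₀ ≤ n ∧
        ((Δ (n + 1) = a ∧ Θ n = ϑ') ∨ (Δ (n + 1) = Eb a ∧ Θ n = ϑ))) :
    (∀ p : List (Fin 2), IsPref p (word Δ Θ) → LeftSpecial p (word Δ Θ)) ∧
    ¬ Periodic (word Δ Θ) := by
  have part1 : ∀ p : List (Fin 2), IsPref p (word Δ Θ) → LeftSpecial p (word Δ Θ) := by
    intro p hp
    exact ⟨0, 1, by decide, cons_factor Δ Θ hΘ hinfE hinfR hneg p hp 0,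
      cons_factor Δ Θ hΘ hinfE hinfR hneg p hp 1⟩
  exact ⟨part1, not_periodic_of_ls (word Δ Θ) part1⟩

end GPS
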